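/- Let k be an integer with k ≠ 0 and k ≠ 1, let h : ℝ → ℝ be twice differentiable with h(t) > 0 for all t, and let λ₀, c₀ ∈ ℝ. Suppose that for all t ∈ ℝ: k·(h''(t) − h'(t)) = −λ₀·h(t), and −λ₀·h(t)² − h''(t)·h(t) − (k−1)·h'(t)² + (2k−1)·h(t)·h'(t) − (k−1)·h(t)² = c₀. Then λ₀ = 0 and there exist constants c₁, c₂ ∈ ℝ such that h(t) = c₁·exp(t) + c₂ for all t ∈ ℝ. -/

import Mathlib

/-- For an integer k ∉ {0,1}, h > 0 twice differentiable, if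
k(h'' − h') = −λ₀ h and −λ₀ h² − h'' h − (k−1)(h')² + (2k−1)h h' − (k−1)h² = c₀,
then λ₀ = 0 and h(t) = c₁ exp(t) + c₂. -/
theorem superWarped_einstein_forward_general_k
    (k : ℤ) (hk0 : k ≠ 0) (hk1 : k ≠ 1)
    (h : ℝ → ℝ) (hpos : ∀ t : ℝ, 0 < h t)
    (hd1 : Differentiable ℝ h) (hd2 : Differentiable ℝ (deriv h))
    (lam c₀ : ℝ)
    (heq1 : ∀ t : ℝ, (k : ℝ) * (deriv (deriv h) t - deriv h t) = -lam * h t)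
    (heq2 : ∀ t : ℝ, -lam * h t ^ 2 - deriv (deriv h) t * h t
        - ((k : ℝ) - 1) * deriv h t ^ 2 + (2 * (k : ℝ) - 1) * h t * deriv h t
        - ((k : ℝ) - 1) * h t ^ 2 = c₀) :
    lam = 0 ∧ ∃ c₁ c₂ : ℝ, ∀ t : ℝ, h t = c₁ * Real.exp t + c₂ := by
  have hk0' : (k : ℝ) ≠ 0 := Int.cast_ne_zero.mpr hk0
  have hk1' : (k : ℝ) - 1 ≠ 0 := sub_ne_zero.mpr (by exact_mod_cast hk1)
  -- express h''
  have hpp : ∀ t, deriv (deriv h) t = deriv h t - lam / (k : ℝ) * h t := by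
    intro t
    have h1 := heq1 t
    field_simp
    linarith
  set A : ℝ := -lam + lam / (k : ℝ) - ((k : ℝ) - 1) with hA
  set F : ℝ → ℝ := fun t => A * h t ^ 2 + (2 * (k : ℝ) - 2) * (h t * deriv h t)
      - ((k : ℝ) - 1) * (deriv h t) ^ 2 with hFdef
  have Fconst : ∀ t, F t = c₀ := by
    intro t
    have h2 := heq2 t
    rw [hpp t] at h2
    simp only [hFdef, hA]
    linear_combination h2
  have hF0 : ∀ t, deriv F t = 0 := by
    have : F = fun _ => c₀ := funext Fconst
    intro t; rw [this]; simp
  have hFD : ∀ t, deriv F t = -2 * ((k : ℝ) - 1) * (lam / (k : ℝ)) * h t ^ 2 := by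
    intro t
    have H1 : HasDerivAt h (deriv h t) t := (hd1 t).hasDerivAt
    have H2 : HasDerivAt (deriv h) (deriv (deriv h) t) t := (hd2 t).hasDerivAt
    have HF : HasDerivAt F
        (A * ((2 : ℕ) * h t ^ 1 * deriv h t)
          + (2 * (k : ℝ) - 2) * (deriv h t * deriv h t + h t * deriv (deriv h) t)
          - ((k : ℝ) - 1) * ((2 : ℕ) * deriv h t ^ 1 * deriv (deriv h) t)) t := by
      exact (((H1.pow 2).const_mul A).add ((H1.mul H2).const_mul _)).sub
        ((H2.pow 2).const_mul _)
    rw [HF.deriv, hpp t, hA]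
    field_simp
    ring
  have hlam : lam = 0 := by
    have e : -2 * ((k : ℝ) - 1) * (lam / (k : ℝ)) * h 0 ^ 2 = 0 := by
      rw [← hFD 0]; exact hF0 0
    have e2 : lam / (k : ℝ) * (((k : ℝ) - 1) * h 0 ^ 2) = 0 := by
      linear_combination (-(1 : ℝ) / 2) * e
    rcases mul_eq_zero.mp e2 with h3 | h3
    · have := (div_eq_zero_iff.mp h3)
      tauto
    · exact absurd h3 (mul_ne_zero hk1' (pow_ne_zero 2 (ne_of_gt (hpos 0))))
  refine ⟨hlam, deriv h 0, h 0 - deriv h 0, ?_⟩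
  have hpp' : ∀ t, deriv (deriv h) t = deriv h t := by
    intro t
    have := hpp t
    rw [hlam] at this
    simpa using this
  -- first: deriv h t = deriv h 0 * exp t
  have hu : ∀ t, deriv h t = deriv h 0 * Real.exp t := by
    set u : ℝ → ℝ := fun t => deriv h t * Real.exp (-t) with hudef
    have hud : ∀ t, HasDerivAt u 0 t := by
      intro t
      have H2 : HasDerivAt (deriv h) (deriv (deriv h) t) t := (hd2 t).hasDerivAt
      have HE : HasDerivAt (fun t : ℝ => Real.exp (-t)) (-Real.exp (-t)) t := by
        simpa [Function.comp_def] using (Real.hasDerivAt_exp (-t)).comp t ((hasDerivAt_id t).neg)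
      have := H2.mul HE
      refine this.congr_deriv ?_
      rw [hpp' t]; ring
    have hconst : ∀ x y : ℝ, u x = u y :=
      is_const_of_deriv_eq_zero (fun t => (hud t).differentiableAt)
        (fun t => (hud t).deriv)
    intro t
    have := hconst t 0
    simp only [hudef] at this
    have h5 : deriv h t * Real.exp (-t) = deriv h 0 := by simpa using this
    have h6 : deriv h t = deriv h t * Real.exp (-t) * Real.exp t := by
      rw [mul_assoc, ← Real.exp_add]; simp
    rw [h6, h5]
  intro t
  set v : ℝ → ℝ := fun t => h t - deriv h 0 * Real.exp t with hvdef
  have hvd : ∀ t, HasDerivAt v 0 t := by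
    intro t
    have H1 : HasDerivAt h (deriv h t) t := (hd1 t).hasDerivAt
    have HE : HasDerivAt (fun t : ℝ => deriv h 0 * Real.exp t)
        (deriv h 0 * Real.exp t) t := (Real.hasDerivAt_exp t).const_mul _
    have := H1.sub HE
    refine this.congr_deriv ?_
    rw [hu t]; ring
  have hconst : ∀ x y : ℝ, v x = v y :=
    is_const_of_deriv_eq_zero (fun t => (hvd t).differentiableAt)
      (fun t => (hvd t).deriv)
  have := hconst t 0
  simp only [hvdef] at this
  rw [Real.exp_zero] at this
  linarith [this]
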